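/- Let L be a regular language with n ≥ 2 distinct quotients and let A be an atom of L with r complemented quotients, 1 ≤ r ≤ n−1. Then the quotient complexity of A is at most f(n,r) = 1 + ∑_{k=1}^{r} ∑_{h=k+1}^{k+n-r} C(n,h)·C(h,k). -/

import Mathlib

def leftQuot {α : Type*} (w : List α) (L : Set (List α)) : Set (List α) := {x | w ++ x ∈ L}

def f (n r : ℕ) : ℕ :=
  1 + ∑ k ∈ Finset.Icc 1 r, ∑ h ∈ Finset.Icc (k + 1) (k + n - r), Nat.choose n h * Nat.choose h k

theorem atom_complexity_upper_bound {α : Type*} (L : Set (List α)) (n r : ℕ)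
    (hn : 2 ≤ n) (hr1 : 1 ≤ r) (hr2 : r ≤ n - 1)
    (K : Fin n → Set (List α))
    (hInj : Function.Injective K)
    (hquot : ∀ i, ∃ w, K i = leftQuot w L)
    (hall : ∀ w : List α, ∃ i, leftQuot w L = K i)
    (hclosed : ∀ (w : List α) (i : Fin n), ∃ j, leftQuot w (K i) = K j)
    (S : Finset (Fin n)) (hS : S.card = n - r)
    (A : Set (List α))
    (hA : A = (⋂ i ∈ S, K i) ∩ ⋂ i ∈ Sᶜ, (K i)ᶜ) (hAne : A.Nonempty) :
    {M : Set (List α) | ∃ w : List α, M = leftQuot w A}.Finite ∧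
      {M : Set (List α) | ∃ w : List α, M = leftQuot w A}.ncard ≤ f n r := by
  classical
  set g : Finset (Fin n) × Finset (Fin n) → Set (List α) :=
    fun p => (⋂ i ∈ p.1, K i) ∩ ⋂ i ∈ p.2, (K i)ᶜ with hg
  set P : Finset (Finset (Fin n) × Finset (Fin n)) :=
    Finset.univ.filter (fun p => p.1.Nonempty ∧ p.2.Nonempty ∧ Disjoint p.1 p.2 ∧
      p.1.card ≤ n - r ∧ p.2.card ≤ r) with hP
  -- basic cardinalities
  have hScard : S.card = n - r := hS
  have hScne : S.Nonempty := by
    rw [← Finset.card_pos, hScard]; omega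
  have hSc : Sᶜ.card = r := by
    have := Finset.card_compl S
    rw [hScard, Fintype.card_fin] at this
    omega
  have hSccne : Sᶜ.Nonempty := by
    rw [← Finset.card_pos, hSc]; omega
  -- every quotient of A is empty or in g '' P
  have hsub : {M : Set (List α) | ∃ w : List α, M = leftQuot w A} ⊆
      insert ∅ (g '' ↑P) := by
    rintro M ⟨w, rfl⟩
    choose σ hσ using hclosed w
    have key : ∀ (i : Fin n) (x : List α), w ++ x ∈ K i ↔ x ∈ K (σ i) := by
      intro i x
      simpa [leftQuot] using (Set.ext_iff.mp (hσ i) x)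
    have hM : leftQuot w A = g (S.image σ, Sᶜ.image σ) := by
      ext x
      simp only [hA, leftQuot, Set.mem_setOf_eq, Set.mem_inter_iff, Set.mem_iInter,
        Set.mem_compl_iff, hg, Finset.mem_coe, Finset.mem_image]
      constructor
      · rintro ⟨h1, h2⟩
        constructor
        · intro j hj
          obtain ⟨i, hi, rfl⟩ := hj
          exact (key i x).mp (h1 i hi)
        · intro j hj hx
          obtain ⟨i, hi, rfl⟩ := hj
          exact h2 i hi ((key i x).mpr hx)
      · rintro ⟨h1, h2⟩
        constructor
        · intro i hi
          exact (key i x).mpr (h1 (σ i) ⟨i, hi, rfl⟩)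
        · intro i hi hx
          exact h2 (σ i) ⟨i, hi, rfl⟩ ((key i x).mp hx)
    rcases Set.eq_empty_or_nonempty (leftQuot w A) with hemp | hne
    · exact Set.mem_insert_iff.mpr (Or.inl hemp)
    · refine Set.mem_insert_iff.mpr (Or.inr ⟨(S.image σ, Sᶜ.image σ), ?_, hM.symm⟩)
      simp only [Finset.mem_coe, hP, Finset.mem_filter, Finset.mem_univ, true_and]
      refine ⟨hScne.image σ, hSccne.image σ, ?_, ?_, ?_⟩
      · rw [Finset.disjoint_left]
        intro j hjX hjY
        obtain ⟨x, hx⟩ := hne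
        rw [hM] at hx
        have hx1 : x ∈ K j := by
          have := hx.1
          simp only [Set.mem_iInter] at this
          exact this j hjX
        have hx2 : x ∉ K j := by
          have := hx.2
          simp only [Set.mem_iInter, Set.mem_compl_iff] at this
          exact this j hjY
        exact hx2 hx1
      · exact le_trans (Finset.card_image_le) (le_of_eq hScard)
      · exact le_trans (Finset.card_image_le) (le_of_eq hSc)
  have hPfin : (insert (∅ : Set (List α)) (g '' ↑P)).Finite :=
    ((P.finite_toSet.image g).insert ∅)
  -- counting: P.card ≤ double sum
  have hPcard : P.card ≤ ∑ k ∈ Finset.Icc 1 r, ∑ h ∈ Finset.Icc (k + 1) (k + n - r),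
      Nat.choose n h * Nat.choose h k := by
    set W : Finset (Finset (Fin n) × Finset (Fin n)) :=
      Finset.univ.filter (fun q => q.2 ⊆ q.1 ∧ 1 ≤ q.2.card ∧ q.2.card ≤ r ∧
        q.2.card + 1 ≤ q.1.card ∧ q.1.card ≤ q.2.card + (n - r)) with hW
    have step1 : P.card ≤ W.card := by
      apply Finset.card_le_card_of_injOn (fun p => (p.1 ∪ p.2, p.2))
      · intro p hp
        simp only [hP, Finset.mem_coe, Finset.mem_filter, Finset.mem_univ, true_and] at hp
        obtain ⟨h1, h2, hd, hc1, hc2⟩ := hp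
        have hcu : (p.1 ∪ p.2).card = p.1.card + p.2.card :=
          Finset.card_union_of_disjoint hd
        simp only [hW, Finset.mem_coe, Finset.mem_filter, Finset.mem_univ, true_and]
        refine ⟨Finset.subset_union_right, ?_, hc2, ?_, ?_⟩
        · exact Finset.card_pos.mpr h2
        · have := Finset.card_pos.mpr h1; omega
        · omega
      · intro p hp q hq heq
        simp only [hP, Finset.coe_filter, Set.mem_setOf_eq] at hp hq
        have heq' : (p.1 ∪ p.2, p.2) = (q.1 ∪ q.2, q.2) := heq
        injection heq' with h1 h2
        have hp1 : p.1 = (p.1 ∪ p.2) \ p.2 := (Finset.union_sdiff_cancel_right hp.2.2.2.1).symm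
        have hq1 : q.1 = (q.1 ∪ q.2) \ q.2 := (Finset.union_sdiff_cancel_right hq.2.2.2.1).symm
        have : p.1 = q.1 := by rw [hp1, hq1, h1, h2]
        exact Prod.ext this h2
    have step2 : W.card ≤ ∑ k ∈ Finset.Icc 1 r, ∑ h ∈ Finset.Icc (k + 1) (k + n - r),
        Nat.choose n h * Nat.choose h k := by
      have hsub2 : W ⊆ (Finset.Icc 1 r).biUnion (fun k =>
          (Finset.Icc (k + 1) (k + n - r)).biUnion (fun h =>
            Finset.univ.filter (fun q : Finset (Fin n) × Finset (Fin n) =>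
              q.2 ⊆ q.1 ∧ q.2.card = k ∧ q.1.card = h))) := by
        intro q hq
        simp only [hW, Finset.mem_filter, Finset.mem_univ, true_and] at hq
        obtain ⟨hss, hk1, hkr, hh1, hh2⟩ := hq
        simp only [Finset.mem_biUnion, Finset.mem_Icc, Finset.mem_filter, Finset.mem_univ,
          true_and]
        exact ⟨q.2.card, ⟨hk1, hkr⟩, q.1.card, ⟨hh1, by omega⟩, hss, rfl, rfl⟩
      refine le_trans (Finset.card_le_card hsub2) ?_
      refine le_trans (Finset.card_biUnion_le) (Finset.sum_le_sum fun k _ => ?_)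
      refine le_trans (Finset.card_biUnion_le) (Finset.sum_le_sum fun h _ => ?_)
      -- card of {(Z,Y) : Y ⊆ Z, |Y| = k, |Z| = h} ≤ C(n,h) * C(h,k)
      have hsub3 : Finset.univ.filter (fun q : Finset (Fin n) × Finset (Fin n) =>
          q.2 ⊆ q.1 ∧ q.2.card = k ∧ q.1.card = h) ⊆
          (Finset.univ.powersetCard h).biUnion (fun Z =>
            (Z.powersetCard k).image (fun Y => (Z, Y))) := by
        intro q hq
        simp only [Finset.mem_filter, Finset.mem_univ, true_and] at hq
        obtain ⟨hss, hk, hh⟩ := hq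
        simp only [Finset.mem_biUnion, Finset.mem_image, Finset.mem_powersetCard_univ,
          Finset.mem_powersetCard]
        exact ⟨q.1, ⟨Finset.subset_univ _, hh⟩, q.2, ⟨hss, hk⟩, rfl⟩
      refine le_trans (Finset.card_le_card hsub3) ?_
      refine le_trans (Finset.card_biUnion_le) ?_
      have : ∀ Z ∈ (Finset.univ : Finset (Fin n)).powersetCard h,
          ((Z.powersetCard k).image (fun Y => (Z, Y))).card ≤ Nat.choose h k := by
        intro Z hZ
        have hZc : Z.card = h := (Finset.mem_powersetCard_univ.mp hZ)
        refine le_trans Finset.card_image_le ?_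
        rw [Finset.card_powersetCard, hZc]
      refine le_trans (Finset.sum_le_sum this) ?_
      rw [Finset.sum_const, Finset.card_powersetCard, Finset.card_univ, Fintype.card_fin,
        smul_eq_mul]
    exact le_trans step1 step2
  constructor
  · exact hPfin.subset hsub
  · have h1 : {M : Set (List α) | ∃ w : List α, M = leftQuot w A}.ncard ≤
        (insert (∅ : Set (List α)) (g '' ↑P)).ncard :=
      Set.ncard_le_ncard hsub hPfin
    have h2 : (insert (∅ : Set (List α)) (g '' ↑P)).ncard ≤ (g '' (↑P : Set _)).ncard + 1 :=
      Set.ncard_insert_le _ _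
    have h3 : (g '' (↑P : Set _)).ncard ≤ (↑P : Set (Finset (Fin n) × Finset (Fin n))).ncard :=
      Set.ncard_image_le P.finite_toSet
    have h4 : (↑P : Set (Finset (Fin n) × Finset (Fin n))).ncard = P.card :=
      Set.ncard_coe_finset P
    unfold f
    omega
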